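/- arXiv:2502.05276 — 2 statements merged into one kernel-verified Lean document; each statement's English description precedes it below -/
import Mathlib

section
/- A Rees matrix semigroup M(H; I, J; ⟨·,·⟩) with nonempty I and J is simple: it has no nonempty proper two-sided ideal. -/
/-- Multiplication of the Rees matrix semigroup `M(H; I, J; p)` on `I × H × J`. -/
def reesMul {H I J : Type*} [Group H] (p : J × I → H)
    (a b : I × H × J) : I × H × J :=
  (a.1, a.2.1 * p (a.2.2, b.1) * b.2.1, b.2.2)

/-- A Rees matrix semigroup with nonempty `I` and `J` is simple: any nonempty
two-sided ideal is the whole semigroup. -/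
theorem reesMatrixSemigroup_simple {H I J : Type*} [Group H] [Nonempty I] [Nonempty J]
    (p : J × I → H) (A : Set (I × H × J))
    (hA : ∀ a ∈ A, ∀ s : I × H × J, reesMul p s a ∈ A ∧ reesMul p a s ∈ A)
    (hne : A.Nonempty) :
    A = Set.univ := by
  obtain ⟨⟨i0, h0, j0⟩, ha⟩ := hne
  ext ⟨i, h, j⟩
  simp only [Set.mem_univ, iff_true]
  inhabit J
  have h1 := (hA _ ha (i, h * (p (default, i0) * h0 * p (j0, i))⁻¹, default)).1
  have h2 := (hA _ h1 (i, 1, j)).2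
  simpa [reesMul, mul_assoc] using h2
end

section
/- Let S be a finite nonempty semigroup. Then S has a left zero or a right zero if and only if S is K-thin and its group completion GS is trivial. (Concretely, in terms of the Rees structure: if z is a left zero of S, then {z} is a minimal right ideal and the structure group H of K(S) is trivial with |J| = 1; conversely if K(S) ≅ M(1; {*}, J; ⟨·,·⟩) with trivial group, then every element of K(S) is a left zero.) -/
/-- A two-sided ideal of a semigroup: `SA ⊆ A` and `AS ⊆ A`. -/
def IsIdeal {S : Type*} [Semigroup S] (A : Set S) : Prop :=
  ∀ a ∈ A, ∀ s : S, s * a ∈ A ∧ a * s ∈ A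

/-- Iterated powers of `a` (indexed from 1): `pw a n = a^(n+1)`. -/
private def pw {S : Type*} [Semigroup S] (a : S) : ℕ → S
  | 0 => a
  | n + 1 => pw a n * a

private lemma pw_add {S : Type*} [Semigroup S] (a : S) (m n : ℕ) :
    pw a (m + n + 1) = pw a m * pw a n := by
  induction n with
  | zero => rfl
  | succ n ih =>
      have : m + (n + 1) + 1 = (m + n + 1) + 1 := by omega
      rw [this]
      show pw a (m + n + 1) * a = pw a m * pw a (n + 1)
      rw [ih, mul_assoc]
      rfl

private lemma pw_mem {S : Type*} [Semigroup S] {K : Set S} (hK : IsIdeal K)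
    {a : S} (ha : a ∈ K) (n : ℕ) : pw a n ∈ K := by
  cases n with
  | zero => exact ha
  | succ n => exact (hK a ha (pw a n)).1

/-- Every nonempty ideal of a finite semigroup contains an idempotent. -/
private lemma exists_idem_of_ideal {S : Type*} [Semigroup S] [Finite S] {K : Set S}
    (hK : IsIdeal K) (hKne : K.Nonempty) : ∃ e ∈ K, e * e = e := by
  obtain ⟨a, ha⟩ := hKne
  obtain ⟨i, j, hij, hpw⟩ := Finite.exists_ne_map_eq_of_infinite (pw a)
  -- WLOG i < j
  wlog hlt : i < j generalizing i j
  · exact this j i hij.symm hpw.symm (by omega)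
  set p := j - i with hp
  have hp1 : 1 ≤ p := by omega
  have hper : ∀ t, pw a (i + p + t) = pw a (i + t) := by
    intro t
    cases t with
    | zero =>
        have hip : i + p = j := by omega
        rw [Nat.add_zero, Nat.add_zero, hip]
        exact hpw.symm
    | succ u =>
        have h1 : i + p + (u + 1) = (i + p) + u + 1 := by omega
        have h2 : i + (u + 1) = i + u + 1 := by omega
        rw [h1, h2, pw_add, pw_add]
        have : pw a (i + p) = pw a i := by
          rw [show i + p = j by omega]; exact hpw.symm
        rw [this]
  have hperk : ∀ k t, pw a (i + t + k * p) = pw a (i + t) := by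
    intro k
    induction k with
    | zero => intro t; simp
    | succ k ih =>
        intro t
        have h1 : i + t + (k + 1) * p = i + p + (t + k * p) := by ring
        rw [h1, hper (t + k * p), show i + (t + k * p) = i + t + k * p by omega, ih t]
  refine ⟨pw a ((i + 1) * p - 1), pw_mem hK ha _, ?_⟩
  set N := (i + 1) * p - 1 with hN
  have hNi : i ≤ N := by
    have : i + 1 ≤ (i + 1) * p := Nat.le_mul_of_pos_right _ (by omega)
    omega
  have hNp : N + 1 = (i + 1) * p := by
    have : 1 ≤ (i + 1) * p := by
      calc 1 ≤ i + 1 := by omega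
      _ ≤ (i + 1) * p := Nat.le_mul_of_pos_right _ (by omega)
    omega
  have h2N : N + N + 1 = i + (N - i) + (i + 1) * p := by omega
  rw [← pw_add, h2N, hperk (i + 1) (N - i), show i + (N - i) = N by omega]

/-- Left-simple case: if `K` is left simple with idempotent `e` and every hom
to a group is trivial, then `e` is a left zero of `S`. -/
private lemma left_case {S : Type} [Semigroup S] [Finite S]
    (K : Set S) (hK : IsIdeal K) (e : S) (heK : e ∈ K) (hee : e * e = e)
    (hsimp : ∀ A : Set S, A ⊆ K → A.Nonempty →
      (∀ a ∈ A, ∀ s ∈ K, s * a ∈ A) → A = K)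
    (htriv : ∀ (Γ : Type) [Group Γ], ∀ f : S →ₙ* Γ, ∀ x : S, f x = 1) :
    ∀ x : S, e * x = e := by
  -- K * b = K for every b ∈ K
  have hKb : ∀ b ∈ K, ∀ k ∈ K, ∃ s, s ∈ K ∧ s * b = k := by
    intro b hb k hk
    have hA : {x | ∃ s, s ∈ K ∧ s * b = x} = K := by
      apply hsimp
      · rintro x ⟨s, hs, rfl⟩; exact (hK b hb s).1
      · exact ⟨b * b, b, hb, rfl⟩
      · rintro x ⟨s, hs, rfl⟩ t ht
        exact ⟨t * s, (hK s hs t).1, mul_assoc t s b⟩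
    rw [← hA] at hk; exact hk
  -- right cancellation by e on K
  have hinj : Function.Injective
      (fun x : {x : S // x ∈ K} => (⟨x.1 * e, (hK e heK x.1).1⟩ : {x : S // x ∈ K})) := by
    apply Finite.injective_iff_surjective.mpr
    intro k
    obtain ⟨s, hs, hse⟩ := hKb e heK k.1 k.2
    exact ⟨⟨s, hs⟩, Subtype.ext hse⟩
  have hxe : ∀ x ∈ K, x * e = x := by
    intro x hx
    have h := hinj (a₁ := ⟨x * e, (hK e heK x).1⟩) (a₂ := ⟨x, hx⟩)
      (Subtype.ext (by simp only [mul_assoc, hee]))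
    exact congrArg Subtype.val h
  have hkey : ∀ s : S, e * s * e = e * s := fun s => hxe (e * s) (hK e heK s).2
  -- build the structure group
  letI : Mul {x : S // x ∈ K ∧ e * x = x} :=
    ⟨fun a b => ⟨a.1 * b.1, (hK b.1 b.2.1 a.1).1, by rw [← mul_assoc, a.2.2]⟩⟩
  letI : One {x : S // x ∈ K ∧ e * x = x} := ⟨⟨e, heK, hee⟩⟩
  letI : Inv {x : S // x ∈ K ∧ e * x = x} :=
    ⟨fun a => ⟨e * (hKb a.1 a.2.1 e heK).choose,
      (hK (hKb a.1 a.2.1 e heK).choose (hKb a.1 a.2.1 e heK).choose_spec.1 e).1,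
      by rw [← mul_assoc, hee]⟩⟩
  letI : Group {x : S // x ∈ K ∧ e * x = x} :=
    Group.ofLeftAxioms (fun a b c => Subtype.ext (mul_assoc a.1 b.1 c.1))
      (fun a => Subtype.ext a.2.2)
      (fun a => Subtype.ext (by
        show e * (hKb a.1 a.2.1 e heK).choose * a.1 = e
        rw [mul_assoc, (hKb a.1 a.2.1 e heK).choose_spec.2, hee]))
  let f : S →ₙ* {x : S // x ∈ K ∧ e * x = x} :=
    { toFun := fun s => ⟨e * s * e, (hK e heK (e * s)).1, by
        rw [← mul_assoc, ← mul_assoc, hee]⟩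
      map_mul' := fun s t => Subtype.ext (by
        show e * (s * t) * e = (e * s * e) * (e * t * e)
        rw [hkey s, hkey t, hkey (s * t), ← mul_assoc, ← mul_assoc, hkey s]) }
  intro x
  have h := congrArg Subtype.val (htriv _ f x)
  have h' : e * x * e = e := h
  rw [hkey x] at h'
  exact h'

/-- Right-simple case: mirror of `left_case`. -/
private lemma right_case {S : Type} [Semigroup S] [Finite S]
    (K : Set S) (hK : IsIdeal K) (e : S) (heK : e ∈ K) (hee : e * e = e)
    (hsimp : ∀ A : Set S, A ⊆ K → A.Nonempty →
      (∀ a ∈ A, ∀ s ∈ K, a * s ∈ A) → A = K)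
    (htriv : ∀ (Γ : Type) [Group Γ], ∀ f : S →ₙ* Γ, ∀ x : S, f x = 1) :
    ∀ x : S, x * e = e := by
  have hbK : ∀ b ∈ K, ∀ k ∈ K, ∃ s, s ∈ K ∧ b * s = k := by
    intro b hb k hk
    have hA : {x | ∃ s, s ∈ K ∧ b * s = x} = K := by
      apply hsimp
      · rintro x ⟨s, hs, rfl⟩; exact (hK b hb s).2
      · exact ⟨b * b, b, hb, rfl⟩
      · rintro x ⟨t, ht, rfl⟩ s hs
        exact ⟨t * s, (hK s hs t).1, (mul_assoc b t s).symm⟩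
    rw [← hA] at hk; exact hk
  have hinj : Function.Injective
      (fun x : {x : S // x ∈ K} => (⟨e * x.1, (hK x.1 x.2 e).1⟩ : {x : S // x ∈ K})) := by
    apply Finite.injective_iff_surjective.mpr
    intro k
    obtain ⟨s, hs, hse⟩ := hbK e heK k.1 k.2
    exact ⟨⟨s, hs⟩, Subtype.ext hse⟩
  have hex : ∀ x ∈ K, e * x = x := by
    intro x hx
    have h := hinj (a₁ := ⟨e * x, (hK x hx e).1⟩) (a₂ := ⟨x, hx⟩)
      (Subtype.ext (by simp only [← mul_assoc, hee]))
    exact congrArg Subtype.val h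
  have hkey : ∀ s : S, e * (s * e) = s * e := fun s => hex (s * e) (hK e heK s).1
  letI : Mul {x : S // x ∈ K ∧ x * e = x} :=
    ⟨fun a b => ⟨a.1 * b.1, (hK a.1 a.2.1 b.1).2, by rw [mul_assoc, b.2.2]⟩⟩
  letI : One {x : S // x ∈ K ∧ x * e = x} := ⟨⟨e, heK, hee⟩⟩
  letI : Inv {x : S // x ∈ K ∧ x * e = x} :=
    ⟨fun a => ⟨(hbK a.1 a.2.1 e heK).choose * e,
      (hK (hbK a.1 a.2.1 e heK).choose (hbK a.1 a.2.1 e heK).choose_spec.1 e).2,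
      by rw [mul_assoc, hee]⟩⟩
  letI : Group {x : S // x ∈ K ∧ x * e = x} :=
    Group.ofRightAxioms (fun a b c => Subtype.ext (mul_assoc a.1 b.1 c.1))
      (fun a => Subtype.ext a.2.2)
      (fun a => Subtype.ext (by
        show a.1 * ((hbK a.1 a.2.1 e heK).choose * e) = e
        rw [← mul_assoc, (hbK a.1 a.2.1 e heK).choose_spec.2, hee]))
  let f : S →ₙ* {x : S // x ∈ K ∧ x * e = x} :=
    { toFun := fun s => ⟨e * s * e, (hK e heK (e * s)).1, by
        rw [mul_assoc, hee]⟩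
      map_mul' := fun s t => Subtype.ext (by
        show e * (s * t) * e = (e * s * e) * (e * t * e)
        simp only [mul_assoc]
        rw [hkey t, hkey t]) }
  intro x
  have h' : e * x * e = e := congrArg Subtype.val (htriv _ f x)
  calc x * e = e * (x * e) := (hkey x).symm
    _ = e * x * e := (mul_assoc e x e).symm
    _ = e := h'

/-- A finite nonempty semigroup `S` has a left zero or a right zero if and only
if `S` is K-thin (its minimal ideal `K(S)` is left-simple or right-simple) and
its group completion `GS` is trivial (equivalently, every semigroup homomorphism
from `S` to a group is trivial). -/
theorem leftOrRightZero_iff_kthin_and_trivial_completion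
    (S : Type) [Semigroup S] [Finite S] [Nonempty S]
    (K : Set S) (hK : IsIdeal K) (hKne : K.Nonempty)
    (hmin : ∀ A : Set S, IsIdeal A → A.Nonempty → K ⊆ A) :
    ((∃ z : S, ∀ x : S, z * x = z) ∨ (∃ z : S, ∀ x : S, x * z = z)) ↔
      (((∀ A : Set S, A ⊆ K → A.Nonempty →
            (∀ a ∈ A, ∀ s ∈ K, s * a ∈ A) → A = K) ∨
          (∀ A : Set S, A ⊆ K → A.Nonempty →
            (∀ a ∈ A, ∀ s ∈ K, a * s ∈ A) → A = K)) ∧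
        ∀ (Γ : Type) [Group Γ], ∀ f : S →ₙ* Γ, ∀ x : S, f x = 1) := by
  constructor
  · rintro (⟨z, hz⟩ | ⟨z, hz⟩)
    · -- left zero
      have hZ : IsIdeal {w : S | ∀ x : S, w * x = w} := by
        intro a ha s
        refine ⟨fun x => ?_, ?_⟩
        · rw [mul_assoc, ha x]
        · simpa [ha s] using ha
      have hKZ : ∀ k ∈ K, ∀ x : S, k * x = k := fun k hk => hmin _ hZ ⟨z, hz⟩ hk
      refine ⟨Or.inl ?_, ?_⟩
      · intro A hAK hAne hAcl
        refine Set.Subset.antisymm hAK fun k hk => ?_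
        obtain ⟨a, ha⟩ := hAne
        have h := hAcl a ha k hk
        rwa [hKZ k hk a] at h
      · intro Γ _ f x
        have h : f z * f x = f z := by rw [← map_mul, hz]
        exact mul_eq_left.mp h
    · -- right zero
      have hZ : IsIdeal {w : S | ∀ x : S, x * w = w} := by
        intro a ha s
        refine ⟨?_, fun x => ?_⟩
        · simpa [ha s] using ha
        · rw [← mul_assoc, ha x]
      have hKZ : ∀ k ∈ K, ∀ x : S, x * k = k := fun k hk => hmin _ hZ ⟨z, hz⟩ hk
      refine ⟨Or.inr ?_, ?_⟩
      · intro A hAK hAne hAcl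
        refine Set.Subset.antisymm hAK fun k hk => ?_
        obtain ⟨a, ha⟩ := hAne
        have h := hAcl a ha k hk
        rwa [hKZ k hk a] at h
      · intro Γ _ f x
        have h : f x * f z = f z := by rw [← map_mul, hz]
        exact mul_eq_right.mp h
  · rintro ⟨hthin | hthin, htriv⟩
    · obtain ⟨e, heK, hee⟩ := exists_idem_of_ideal hK hKne
      exact Or.inl ⟨e, left_case K hK e heK hee hthin htriv⟩
    · obtain ⟨e, heK, hee⟩ := exists_idem_of_ideal hK hKne
      exact Or.inr ⟨e, right_case K hK e heK hee hthin htriv⟩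
end
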